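/- In the Merge construction applied to odd-voter Dodgson triples (C,c,V) and (D,d,W) with c ≠ d and disjoint candidate sets, the Dodgson score of c in the merged election equals Score(C,c,V) + 1, and the Dodgson score of d in the merged election equals Score(D,d,W) + 1. -/

import Mathlib

/-- A voter's preference order is a list of candidates in *increasing* order of
preference (the head is the least preferred, the last element the most preferred).
`prefers v x y` means voter `v` strictly prefers `x` to `y`. -/
def prefers {α : Type*} [DecidableEq α] (v : List α) (x y : α) : Prop :=
  v.idxOf y < v.idxOf x

/-- The number of voters in the profile `V` preferring `x` to `y`. -/
def numPrefer {α : Type*} [DecidableEq α] (V : List (List α)) (x y : α) : ℕ :=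
  (V.filter (fun v => decide (v.idxOf y < v.idxOf x))).length

/-- `c` is a Condorcet winner: strictly more than half of the voters prefer `c`
to each other candidate. -/
def CondorcetWinner {α : Type*} [DecidableEq α] (C : Finset α) (V : List (List α))
    (c : α) : Prop :=
  c ∈ C ∧ ∀ d ∈ C, d ≠ c → V.length < 2 * numPrefer V c d

/-- One switch in a single preference order: exchange two adjacent candidates. -/
def SwitchVoter {α : Type*} (v w : List α) : Prop :=
  ∃ (l r : List α) (x y : α), v = l ++ x :: y :: r ∧ w = l ++ y :: x :: r

/-- One switch in a profile: exchange two adjacent candidates in one voter's order. -/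
def SwitchProfile {α : Type*} (V W : List (List α)) : Prop :=
  ∃ (P Q : List (List α)) (v w : List α),
    V = P ++ v :: Q ∧ W = P ++ w :: Q ∧ SwitchVoter v w

/-- `Reach R k a b`: `b` is reachable from `a` in exactly `k` `R`-steps. -/
def Reach {β : Type*} (R : β → β → Prop) : ℕ → β → β → Prop
  | 0, a, b => a = b
  | k + 1, a, b => ∃ m, R a m ∧ Reach R k m b

/-- The Dodgson score of candidate `c`: the minimum number of switches needed to
make `c` a Condorcet winner. -/
noncomputable def DodgsonScore {α : Type*} [DecidableEq α] (C : Finset α)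
    (V : List (List α)) (c : α) : ℕ :=
  sInf {k | ∃ W, Reach SwitchProfile k V W ∧ CondorcetWinner C W c}

/-- `v` is a valid preference order on the candidate set `C`. -/
def IsVoter {α : Type*} [DecidableEq α] (C : Finset α) (v : List α) : Prop :=
  v.Nodup ∧ ∀ x, x ∈ v ↔ x ∈ C

section Merge

variable {α : Type*} [DecidableEq α]

/-- Validity of the data for the `Merge` construction: Dodgson triples
`(C, c, V)` and `(D, d, W)` with `c ≠ d`, disjoint candidate sets, both with an
odd number of voters and `||V|| ≥ ||W||`; `cL` and `dL` are fixed enumerations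
of `C \ {c}` and `D \ {d}`; `sL` and `tL` enumerate the fresh separator sets `S`
and `T`, each of size `2(||C||·||V|| + ||D||·||W||)`. -/
def MergeOK (C D : Finset α) (c d : α) (V W : List (List α))
    (cL dL sL tL : List α) : Prop :=
  c ∈ C ∧ d ∈ D ∧ c ≠ d ∧ Disjoint C D ∧
  Odd V.length ∧ Odd W.length ∧ W.length ≤ V.length ∧
  (∀ v ∈ V, IsVoter C v) ∧ (∀ w ∈ W, IsVoter D w) ∧
  cL.Nodup ∧ (∀ z, z ∈ cL ↔ (z ∈ C ∧ z ≠ c)) ∧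
  dL.Nodup ∧ (∀ z, z ∈ dL ↔ (z ∈ D ∧ z ≠ d)) ∧
  sL.Nodup ∧ tL.Nodup ∧
  sL.length = 2 * (C.card * V.length + D.card * W.length) ∧
  tL.length = 2 * (C.card * V.length + D.card * W.length) ∧
  (∀ z ∈ sL, z ∉ C ∧ z ∉ D ∧ z ∉ tL) ∧
  (∀ z ∈ tL, z ∉ C ∧ z ∉ D)

/-- The merged candidate set `Ĉ = C ∪ D ∪ S ∪ T`. -/
def MergeCands (C D : Finset α) (sL tL : List α) : Finset α :=
  C ∪ D ∪ sL.toFinset ∪ tL.toFinset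

/-- The merged voter list `V̂` (orders are lists in increasing preference):
(a) for each voter `v` of `V` the order `⟨d < S < D\{d} < T < v⟩`;
(b) for each voter `w` of `W` the order `⟨T < c < S < C\{c} < w⟩`;
(c) `⌈||V||/2⌉ - ⌈||W||/2⌉` voters `⟨T < c < S < C\{c} < D\{d} < d⟩`;
(d) `⌈||V||/2⌉` voters `⟨T < C\{c} < D\{d} < reversed S < c < d⟩`;
(e) `⌈||W||/2⌉` voters `⟨T < C\{c} < D\{d} < S < d < c⟩`. -/
def MergeProfile (c d : α) (V W : List (List α)) (cL dL sL tL : List α) :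
    List (List α) :=
  V.map (fun v => [d] ++ sL ++ dL ++ tL ++ v) ++
  W.map (fun w => tL ++ [c] ++ sL ++ cL ++ w) ++
  List.replicate ((V.length + 1) / 2 - (W.length + 1) / 2)
    (tL ++ [c] ++ sL ++ cL ++ dL ++ [d]) ++
  List.replicate ((V.length + 1) / 2) (tL ++ cL ++ dL ++ sL.reverse ++ [c, d]) ++
  List.replicate ((W.length + 1) / 2) (tL ++ cL ++ dL ++ sL ++ [d, c])

end Merge

section Basic
set_option linter.unusedSectionVars false
variable {α : Type*} [DecidableEq α]

instance {v : List α} {x y : α} : Decidable (prefers v x y) :=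
  inferInstanceAs (Decidable (_ < _))

lemma reach_trans {β : Type*} {R : β → β → Prop} :
    ∀ {k l : ℕ} {a b c : β}, Reach R k a b → Reach R l b c → Reach R (k + l) a c := by
  intro k
  induction k with
  | zero => intro l a b c h h'; cases h; simpa using h'
  | succ k ih =>
    intro l a b c h h'
    obtain ⟨m, hm, hr⟩ := h
    rw [Nat.succ_add]
    exact ⟨m, hm, ih hr h'⟩

lemma reach_one {β : Type*} {R : β → β → Prop} {a b : β} (h : R a b) : Reach R 1 a b :=
  ⟨b, h, rfl⟩

lemma switchVoter_perm {v w : List α} (h : SwitchVoter v w) : v.Perm w := by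
  obtain ⟨l, r, x, y, rfl, rfl⟩ := h
  exact List.Perm.append_left l (by exact List.Perm.swap y x r)

lemma switchProfile_length {A B : List (List α)} (h : SwitchProfile A B) :
    A.length = B.length := by
  obtain ⟨P, Q, v, w, rfl, rfl, _⟩ := h
  simp

lemma reach_profile_length {k : ℕ} {A B : List (List α)} (h : Reach SwitchProfile k A B) :
    A.length = B.length := by
  induction k generalizing A with
  | zero => cases h; rfl
  | succ k ih => obtain ⟨M, hM, hr⟩ := h; exact (switchProfile_length hM).trans (ih hr)

lemma reach_profile_mem {k : ℕ} {A B : List (List α)} (h : Reach SwitchProfile k A B) :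
    ∀ u ∈ B, ∃ u' ∈ A, u'.Perm u := by
  induction k generalizing A with
  | zero => cases h; exact fun u hu => ⟨u, hu, List.Perm.refl u⟩
  | succ k ih =>
    obtain ⟨M, hM, hr⟩ := h
    intro u hu
    obtain ⟨u', hu', hp⟩ := ih hr u hu
    obtain ⟨P, Q, v, w, rfl, rfl, hsw⟩ := hM
    rcases List.mem_append.1 hu' with h1 | h1
    · exact ⟨u', List.mem_append.2 (Or.inl h1), hp⟩
    · rcases List.mem_cons.1 h1 with h2 | h2
      · subst h2; exact ⟨v, by simp, (switchVoter_perm hsw).trans hp⟩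
      · exact ⟨u', by simp [h2], hp⟩

lemma indexOf_append_left {l r : List α} {x : α} (h : x ∈ l) :
    (l ++ r).idxOf x = l.idxOf x := List.idxOf_append_of_mem h

lemma indexOf_append_right {l r : List α} {x : α} (h : x ∉ l) :
    (l ++ r).idxOf x = l.length + r.idxOf x := by
  induction l with
  | nil => simp
  | cons a l ih =>
    have hxa : x ≠ a := fun he => h (by simp [he])
    have : x ∉ l := fun he => h (by simp [he])
    simp [List.idxOf_cons_ne _ hxa.symm, ih this, Nat.succ_add]

lemma indexOf_lt_of_mem {l : List α} {x : α} (h : x ∈ l) : l.idxOf x < l.length :=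
  List.idxOf_lt_length_iff.2 h

lemma prefers_of_split {L R : List α} {x y : α} (hy : y ∈ L) (hx : x ∉ L) :
    prefers (L ++ R) x y := by
  unfold prefers
  rw [indexOf_append_left hy, indexOf_append_right hx]
  exact lt_of_lt_of_le (indexOf_lt_of_mem hy) (Nat.le_add_right _ _)

lemma not_prefers_of_split {L R : List α} {x y : α} (hx : x ∈ L) (hy : y ∉ L) :
    ¬ prefers (L ++ R) x y := by
  unfold prefers
  rw [indexOf_append_left hx, indexOf_append_right hy]
  exact fun h => absurd (lt_of_le_of_lt (Nat.le_add_right _ _) h)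
    (not_lt.2 (le_of_lt (indexOf_lt_of_mem hx)))

lemma prefers_append_iff {L R : List α} {x y : α} (hx : x ∉ L) (hy : y ∉ L) :
    prefers (L ++ R) x y ↔ prefers R x y := by
  unfold prefers
  rw [indexOf_append_right hx, indexOf_append_right hy]
  omega

lemma numPrefer_append {A B : List (List α)} {x y : α} :
    numPrefer (A ++ B) x y = numPrefer A x y + numPrefer B x y := by
  unfold numPrefer
  rw [List.filter_append, List.length_append]

lemma numPrefer_cons {u : List α} {A : List (List α)} {x y : α} :
    numPrefer (u :: A) x y =
      (if prefers u x y then 1 else 0) + numPrefer A x y := by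
  unfold numPrefer prefers
  by_cases h : u.idxOf y < u.idxOf x <;> simp [List.filter_cons, h, Nat.add_comm]

lemma numPrefer_nil {x y : α} : numPrefer ([] : List (List α)) x y = 0 := rfl

lemma numPrefer_eq_length {A : List (List α)} {x y : α} (h : ∀ u ∈ A, prefers u x y) :
    numPrefer A x y = A.length := by
  induction A with
  | nil => rfl
  | cons u A ih =>
    rw [numPrefer_cons, if_pos (h u (by simp)), ih (fun u hu => h u (by simp [hu]))]
    simp [Nat.add_comm]

lemma numPrefer_eq_zero {A : List (List α)} {x y : α} (h : ∀ u ∈ A, ¬ prefers u x y) :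
    numPrefer A x y = 0 := by
  induction A with
  | nil => rfl
  | cons u A ih =>
    rw [numPrefer_cons, if_neg (h u (by simp)), ih (fun u hu => h u (by simp [hu]))]

lemma numPrefer_le_length {A : List (List α)} {x y : α} : numPrefer A x y ≤ A.length :=
  List.length_filter_le _ _

lemma numPrefer_replicate {u : List α} {r : ℕ} {x y : α} (h : prefers u x y) :
    numPrefer (List.replicate r u) x y = r := by
  rw [numPrefer_eq_length (fun v hv => (List.eq_of_mem_replicate hv) ▸ h)]
  simp

lemma numPrefer_replicate_zero {u : List α} {r : ℕ} {x y : α} (h : ¬ prefers u x y) :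
    numPrefer (List.replicate r u) x y = 0 :=
  numPrefer_eq_zero (fun v hv => (List.eq_of_mem_replicate hv) ▸ h)

lemma numPrefer_map_eq {V : List (List α)} {f : List α → List α} {x y : α}
    (h : ∀ v ∈ V, prefers (f v) x y ↔ prefers v x y) :
    numPrefer (V.map f) x y = numPrefer V x y := by
  induction V with
  | nil => rfl
  | cons v V ih =>
    simp only [List.map_cons, numPrefer_cons]
    rw [ih (fun u hu => h u (by simp [hu]))]
    congr 1
    by_cases hp : prefers v x y
    · rw [if_pos ((h v (by simp)).2 hp), if_pos hp]
    · rw [if_neg (fun hh => hp ((h v (by simp)).1 hh)), if_neg hp]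

lemma numPrefer_map_eq_length {V : List (List α)} {f : List α → List α} {x y : α}
    (h : ∀ v ∈ V, prefers (f v) x y) :
    numPrefer (V.map f) x y = V.length := by
  rw [numPrefer_eq_length (by simpa using fun v hv => h v hv), List.length_map]

lemma numPrefer_map_eq_zero {V : List (List α)} {f : List α → List α} {x y : α}
    (h : ∀ v ∈ V, ¬ prefers (f v) x y) :
    numPrefer (V.map f) x y = 0 := by
  rw [numPrefer_eq_zero (by simpa using fun v hv => h v hv)]

lemma numPrefer_le_of_forall₂ {A B : List (List α)} {x y : α}
    (h : List.Forall₂ (fun u u' => prefers u' x y → prefers u x y) A B) :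
    numPrefer B x y ≤ numPrefer A x y := by
  induction h with
  | nil => exact le_rfl
  | cons hr _ ih =>
    rename_i u u' A' B' _
    rw [numPrefer_cons, numPrefer_cons]
    by_cases hp : prefers u' x y
    · rw [if_pos hp, if_pos (hr hp)]; omega
    · rw [if_neg hp]; split <;> omega

end Basic

section Stage2
set_option linter.unusedSectionVars false
variable {α : Type*} [DecidableEq α]

/-- indexOf moves by at most 1 under a single adjacent switch. -/
lemma switchVoter_indexOf_dist {u w : List α} (h : SwitchVoter u w) (z : α) :
    Nat.dist (u.idxOf z) (w.idxOf z) ≤ 1 := by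
  obtain ⟨l, r, p, q, rfl, rfl⟩ := h
  by_cases hzl : z ∈ l
  · rw [indexOf_append_left hzl, indexOf_append_left hzl]; simp [Nat.dist_self]
  · rw [indexOf_append_right hzl, indexOf_append_right hzl]
    rcases eq_or_ne z p with rfl | hzp
    · rcases eq_or_ne z q with rfl | hzq
      · simp [Nat.dist_self]
      · rw [List.idxOf_cons_self, List.idxOf_cons_ne _ (Ne.symm hzq),
          List.idxOf_cons_self]
        simp [Nat.dist]
    · rcases eq_or_ne z q with rfl | hzq
      · rw [List.idxOf_cons_ne _ (Ne.symm hzp), List.idxOf_cons_self,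
          List.idxOf_cons_self]
        simp [Nat.dist]
      · rw [List.idxOf_cons_ne _ (Ne.symm hzp), List.idxOf_cons_ne _ (Ne.symm hzq),
          List.idxOf_cons_ne _ (Ne.symm hzq), List.idxOf_cons_ne _ (Ne.symm hzp)]
        simp [Nat.dist_self]

lemma reach_voter_indexOf_dist {t : ℕ} {u w : List α} (h : Reach SwitchVoter t u w) (z : α) :
    Nat.dist (u.idxOf z) (w.idxOf z) ≤ t := by
  induction t generalizing u with
  | zero => cases h; simp [Nat.dist_self]
  | succ t ih =>
    obtain ⟨m, hm, hr⟩ := h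
    calc Nat.dist (u.idxOf z) (w.idxOf z)
        ≤ Nat.dist (u.idxOf z) (m.idxOf z) + Nat.dist (m.idxOf z) (w.idxOf z) :=
          Nat.dist.triangle_inequality _ _ _
      _ ≤ 1 + t := Nat.add_le_add (switchVoter_indexOf_dist hm z) (ih hr)
      _ = t + 1 := Nat.add_comm _ _

/-- Preference between far-apart candidates is preserved by few switches. -/
lemma prefers_of_reach_far {t : ℕ} {u w : List α} {x y : α}
    (h : Reach SwitchVoter t u w)
    (hfar : 2 * t < Nat.dist (u.idxOf x) (u.idxOf y)) :
    prefers w x y ↔ prefers u x y := by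
  have hx := reach_voter_indexOf_dist h x
  have hy := reach_voter_indexOf_dist h y
  unfold prefers
  simp only [Nat.dist] at hx hy hfar
  omega

lemma reach_voter_perm {t : ℕ} {u w : List α} (h : Reach SwitchVoter t u w) : u.Perm w := by
  induction t generalizing u with
  | zero => cases h; exact List.Perm.refl _
  | succ t ih =>
    obtain ⟨m, hm, hr⟩ := h
    exact (switchVoter_perm hm).trans (ih hr)

/-- Per-position extraction of switches. -/
lemma switchProfile_getD {A B : List (List α)} (h : SwitchProfile A B) (i : ℕ) :
    A.getD i [] = B.getD i [] ∨ SwitchVoter (A.getD i []) (B.getD i []) := by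
  obtain ⟨P, Q, v, w, rfl, rfl, hsw⟩ := h
  rcases lt_trichotomy i P.length with hi | rfl | hi
  · left
    rw [List.getD_eq_getElem?_getD, List.getD_eq_getElem?_getD,
      List.getElem?_append_left hi, List.getElem?_append_left hi]
  · right
    rw [List.getD_eq_getElem?_getD, List.getD_eq_getElem?_getD,
      List.getElem?_append_right le_rfl, List.getElem?_append_right le_rfl]
    simpa using hsw
  · left
    have hle : P.length ≤ i := le_of_lt hi
    rw [List.getD_eq_getElem?_getD, List.getD_eq_getElem?_getD,
      List.getElem?_append_right hle, List.getElem?_append_right hle]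
    obtain ⟨j, hj⟩ := Nat.exists_eq_add_of_lt hi
    have : i - P.length = j + 1 := by omega
    rw [this]
    simp

lemma reach_profile_getD {k : ℕ} {A B : List (List α)} (h : Reach SwitchProfile k A B)
    (i : ℕ) : ∃ t ≤ k, Reach SwitchVoter t (A.getD i []) (B.getD i []) := by
  induction k generalizing A with
  | zero => cases h; exact ⟨0, le_rfl, rfl⟩
  | succ k ih =>
    obtain ⟨M, hM, hr⟩ := h
    obtain ⟨t, ht, hrt⟩ := ih hr
    rcases switchProfile_getD hM i with he | hsw
    · exact ⟨t, le_trans ht (Nat.le_succ _), he ▸ hrt⟩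
    · exact ⟨t + 1, Nat.succ_le_succ ht, ⟨_, hsw, hrt⟩⟩

end Stage2

section Stage3
set_option linter.unusedSectionVars false
variable {α : Type*} [DecidableEq α]

lemma prefers_switch_invar {l r : List α} {p q x y : α} (hyp : y ≠ p) (hyq : y ≠ q) :
    prefers (l ++ q :: p :: r) x y ↔ prefers (l ++ p :: q :: r) x y := by
  rcases eq_or_ne p q with rfl | hpq
  · rfl
  unfold prefers
  by_cases hyl : y ∈ l
  · rw [indexOf_append_left hyl, indexOf_append_left hyl]
    by_cases hxl : x ∈ l
    · rw [indexOf_append_left hxl, indexOf_append_left hxl]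
    · rw [indexOf_append_right hxl, indexOf_append_right hxl]
      have := indexOf_lt_of_mem hyl
      omega
  · rw [indexOf_append_right hyl, indexOf_append_right hyl,
      List.idxOf_cons_ne _ (Ne.symm hyq), List.idxOf_cons_ne _ (Ne.symm hyp),
      List.idxOf_cons_ne _ (Ne.symm hyp), List.idxOf_cons_ne _ (Ne.symm hyq)]
    by_cases hxl : x ∈ l
    · rw [indexOf_append_left hxl, indexOf_append_left hxl]
    · rw [indexOf_append_right hxl, indexOf_append_right hxl]
      rcases eq_or_ne x p with rfl | hxp
      · rw [List.idxOf_cons_ne _ hpq.symm, List.idxOf_cons_self, List.idxOf_cons_self]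
        omega
      · rcases eq_or_ne x q with rfl | hxq
        · rw [List.idxOf_cons_self, List.idxOf_cons_ne _ hpq, List.idxOf_cons_self]
          omega
        · rw [List.idxOf_cons_ne _ (Ne.symm hxq), List.idxOf_cons_ne _ (Ne.symm hxp),
            List.idxOf_cons_ne _ (Ne.symm hxp), List.idxOf_cons_ne _ (Ne.symm hxq)]

lemma numPrefer_switch_invar {P Q : List (List α)} {l r : List α} {p q x y : α}
    (hyp : y ≠ p) (hyq : y ≠ q) :
    numPrefer (P ++ (l ++ q :: p :: r) :: Q) x y
      = numPrefer (P ++ (l ++ p :: q :: r) :: Q) x y := by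
  rw [numPrefer_append, numPrefer_append, numPrefer_cons, numPrefer_cons]
  congr 2
  by_cases h : prefers (l ++ p :: q :: r) x y
  · rw [if_pos h, if_pos ((prefers_switch_invar hyp hyq).2 h)]
  · rw [if_neg h, if_neg (fun hh => h ((prefers_switch_invar hyp hyq).1 hh))]

lemma numPrefer_switch_le {A B : List (List α)} {x y : α} (h : SwitchProfile A B) :
    numPrefer B x y ≤ numPrefer A x y + 1 := by
  obtain ⟨P, Q, v, w, rfl, rfl, _⟩ := h
  rw [numPrefer_append, numPrefer_append, numPrefer_cons, numPrefer_cons]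
  split <;> split <;> omega

lemma filter_switch_eq {l r : List α} {p q : α} {pr : α → Bool} (h : ¬(pr p ∧ pr q)) :
    (l ++ p :: q :: r).filter pr = (l ++ q :: p :: r).filter pr := by
  rw [List.filter_append, List.filter_append]
  congr 1
  by_cases hp : pr p <;> by_cases hq : pr q <;>
    simp [List.filter_cons, hp, hq] at h ⊢

lemma switchVoter_filter {l r : List α} {p q : α} {pr : α → Bool} (hp : pr p) (hq : pr q) :
    SwitchVoter ((l ++ p :: q :: r).filter pr) ((l ++ q :: p :: r).filter pr) := by
  rw [List.filter_append, List.filter_append, List.filter_cons_of_pos hp,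
    List.filter_cons_of_pos hq, List.filter_cons_of_pos hq, List.filter_cons_of_pos hp]
  exact ⟨l.filter pr, r.filter pr, p, q, rfl, rfl⟩

/-- The projection of a block of the profile to a candidate subset. -/
def projBlock (lo len : ℕ) (s : Finset α) (A : List (List α)) : List (List α) :=
  ((A.drop lo).take len).map (List.filter (fun z => decide (z ∈ s)))

lemma projBlock_switch_cases {lo len : ℕ} {s : Finset α} {A B : List (List α)} {x y : α}
    (hy : y ∉ s) (h : SwitchProfile A B) :
    (projBlock lo len s A = projBlock lo len s B ∧
      numPrefer B x y ≤ numPrefer A x y + 1) ∨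
    (SwitchProfile (projBlock lo len s A) (projBlock lo len s B) ∧
      numPrefer B x y = numPrefer A x y) := by
  obtain ⟨P, Q, v, w, rfl, rfl, l, r, p, q, rfl, rfl⟩ := h
  have hnle : numPrefer (P ++ (l ++ q :: p :: r) :: Q) x y
      ≤ numPrefer (P ++ (l ++ p :: q :: r) :: Q) x y + 1 :=
    numPrefer_switch_le ⟨P, Q, _, _, rfl, rfl, l, r, p, q, rfl, rfl⟩
  set pr : α → Bool := fun z => decide (z ∈ s) with hpr
  unfold projBlock
  rw [List.drop_append, List.drop_append,
    List.take_append, List.take_append]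
  by_cases h1 : P.length < lo
  · left
    refine ⟨?_, hnle⟩
    have : lo - P.length = (lo - P.length - 1) + 1 := by omega
    rw [this, List.drop_succ_cons, List.drop_succ_cons]
  · push_neg at h1
    rw [Nat.sub_eq_zero_of_le h1, List.drop_zero, List.drop_zero]
    by_cases h2 : len ≤ (P.drop lo).length
    · left
      refine ⟨?_, hnle⟩
      rw [Nat.sub_eq_zero_of_le h2, List.take_zero, List.take_zero]
    · push_neg at h2
      have : len - (P.drop lo).length = (len - (P.drop lo).length - 1) + 1 := by omega
      rw [this, List.take_succ_cons, List.take_succ_cons]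
      by_cases h3 : pr p ∧ pr q
      · right
        constructor
        · rw [List.map_append, List.map_append, List.map_cons, List.map_cons]
          exact ⟨_, _, _, _, rfl, rfl, switchVoter_filter h3.1 h3.2⟩
        · have hyp : y ≠ p := fun he => hy (by simpa [hpr, he] using h3.1)
          have hyq : y ≠ q := fun he => hy (by simpa [hpr, he] using h3.2)
          exact numPrefer_switch_invar hyp hyq
      · left
        refine ⟨?_, hnle⟩
        simp only [← hpr]
        rw [List.map_append, List.map_append, List.map_cons, List.map_cons,
          filter_switch_eq h3]

/-- Key projection lemma. -/
lemma KL {lo len : ℕ} {s : Finset α} {x y : α} (hy : y ∉ s) :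
    ∀ {k : ℕ} {A B : List (List α)}, Reach SwitchProfile k A B →
    ∃ j ≤ k, Reach SwitchProfile j (projBlock lo len s A) (projBlock lo len s B) ∧
      numPrefer B x y ≤ numPrefer A x y + (k - j) := by
  intro k
  induction k with
  | zero =>
    intro A B h; cases h
    exact ⟨0, le_rfl, rfl, by omega⟩
  | succ k ih =>
    intro A B h
    obtain ⟨M, hM, hr⟩ := h
    obtain ⟨j, hjk, hreach, hnum⟩ := ih hr
    rcases projBlock_switch_cases (lo := lo) (len := len) (x := x) hy hM with
      ⟨heq, hle⟩ | ⟨hsw, heqn⟩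
    · exact ⟨j, le_trans hjk (Nat.le_succ _), heq ▸ hreach, by omega⟩
    · exact ⟨j + 1, Nat.succ_le_succ hjk, ⟨_, hsw, hreach⟩, by omega⟩

end Stage3

section Stage4
set_option linter.unusedSectionVars false
variable {α : Type*} [DecidableEq α]

lemma reach_cons {k : ℕ} {A B : List (List α)} {h0 : List α}
    (h : Reach SwitchProfile k A B) :
    Reach SwitchProfile k (h0 :: A) (h0 :: B) := by
  induction k generalizing A with
  | zero => cases h; rfl
  | succ k ih =>
    obtain ⟨M, ⟨P, Q, v, w, rfl, rfl, hsw⟩, hr⟩ := h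
    exact ⟨h0 :: (P ++ w :: Q), ⟨h0 :: P, Q, v, w, rfl, rfl, hsw⟩, ih hr⟩

lemma reach_lift_one {t : ℕ} {v w : List α} {P Q : List (List α)}
    (h : Reach SwitchVoter t v w) :
    Reach SwitchProfile t (P ++ v :: Q) (P ++ w :: Q) := by
  induction t generalizing v with
  | zero => cases h; rfl
  | succ t ih =>
    obtain ⟨m, hm, hr⟩ := h
    exact ⟨P ++ m :: Q, ⟨P, Q, v, m, rfl, rfl, hm⟩, ih hr⟩

lemma reach_map_prefix {k : ℕ} {X Y : List (List α)} {pre : List α}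
    (h : Reach SwitchProfile k X Y) :
    Reach SwitchProfile k (X.map (pre ++ ·)) (Y.map (pre ++ ·)) := by
  induction k generalizing X with
  | zero => cases h; rfl
  | succ k ih =>
    obtain ⟨M, ⟨P, Q, v, w, rfl, rfl, l, r, p, q, rfl, rfl⟩, hr⟩ := h
    refine ⟨_, ?_, ih hr⟩
    refine ⟨P.map (pre ++ ·), Q.map (pre ++ ·), pre ++ (l ++ p :: q :: r),
      pre ++ (l ++ q :: p :: r), by simp, by simp, pre ++ l, r, p, q, by simp, by simp⟩

lemma reach_pad {k : ℕ} {X Y P0 R0 : List (List α)}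
    (h : Reach SwitchProfile k X Y) :
    Reach SwitchProfile k (P0 ++ X ++ R0) (P0 ++ Y ++ R0) := by
  induction k generalizing X with
  | zero => cases h; rfl
  | succ k ih =>
    obtain ⟨M, ⟨P, Q, v, w, rfl, rfl, hsw⟩, hr⟩ := h
    refine ⟨P0 ++ (P ++ w :: Q) ++ R0, ⟨P0 ++ P, Q ++ R0, v, w, by simp, by simp, hsw⟩, ih hr⟩

lemma reach_move_to_end {x : α} : ∀ (l r : List α),
    Reach SwitchVoter r.length (l ++ x :: r) ((l ++ r) ++ [x]) := by
  intro l r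
  induction r generalizing l with
  | nil => simp [Reach]
  | cons y r ih =>
    refine ⟨(l ++ [y]) ++ x :: r, ⟨l, r, x, y, rfl, by simp⟩, ?_⟩
    have := ih (l ++ [y])
    simpa using this

/-- Move `x` to the top of every voter. -/
lemma reach_make_top {x : α} :
    ∀ (A : List (List α)), (∀ u ∈ A, x ∈ u ∧ u.Nodup) →
    ∃ t B, t ≤ (A.map List.length).sum ∧ Reach SwitchProfile t A B ∧
      (∀ u ∈ B, ∀ y ∈ u, y ≠ x → prefers u x y) := by
  intro A
  induction A with
  | nil => exact fun _ => ⟨0, [], by simp, rfl, by simp⟩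
  | cons u A ih =>
    intro h
    obtain ⟨hx, hnd⟩ := h u (by simp)
    obtain ⟨l, r, rfl⟩ := List.append_of_mem hx
    obtain ⟨t, B, htle, hrB, hprop⟩ := ih (fun u hu => h u (by simp [hu]))
    refine ⟨r.length + t, ((l ++ r) ++ [x]) :: B, ?_, ?_, ?_⟩
    · simp only [List.map_cons, List.sum_cons, List.length_append, List.length_cons]
      omega
    · exact reach_trans (reach_lift_one (P := []) (Q := A) (reach_move_to_end l r))
        (reach_cons hrB)
    · intro v hv y hy hyx
      rcases List.mem_cons.1 hv with rfl | hv
      · have hxlr : x ∉ l ++ r := by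
          intro hmem
          rcases List.mem_append.1 hmem with h1 | h1
          · exact (List.disjoint_of_nodup_append hnd) h1 (by simp)
          · have := (List.nodup_append.1 hnd).2.1
            simp at this
            exact this.1 h1
        have hylr : y ∈ l ++ r := by
          rcases List.mem_append.1 hy with h1 | h1
          · exact h1
          · simp at h1; exact absurd h1 hyx
        exact prefers_of_split hylr hxlr
      · exact hprop v hv y hy hyx

lemma dodgsonScore_le {C : Finset α} {A B : List (List α)} {c : α} {k : ℕ}
    (h : Reach SwitchProfile k A B) (hc : CondorcetWinner C B c) :
    DodgsonScore C A c ≤ k :=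
  Nat.sInf_le ⟨B, h, hc⟩

lemma dodgsonScore_witness {C : Finset α} {A : List (List α)} {c : α}
    (h : {k | ∃ B, Reach SwitchProfile k A B ∧ CondorcetWinner C B c}.Nonempty) :
    ∃ B, Reach SwitchProfile (DodgsonScore C A c) A B ∧ CondorcetWinner C B c :=
  Nat.sInf_mem h

/-- Crude upper bound for the Dodgson score of a well-formed election. -/
lemma dodgsonScore_bound {C : Finset α} {A : List (List α)} {c : α}
    (hc : c ∈ C) (hV : ∀ v ∈ A, IsVoter C v) (hn : 0 < A.length) :
    DodgsonScore C A c ≤ C.card * A.length ∧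
    {k | ∃ B, Reach SwitchProfile k A B ∧ CondorcetWinner C B c}.Nonempty := by
  obtain ⟨t, B, htle, hrB, hprop⟩ := reach_make_top (x := c) A
    (fun u hu => ⟨((hV u hu).2 c).2 hc, (hV u hu).1⟩)
  have hlen : ∀ u ∈ A, u.length = C.card := by
    intro u hu
    obtain ⟨hnd, hmem⟩ := hV u hu
    rw [← List.toFinset_card_of_nodup hnd]
    congr 1
    ext z
    simp [hmem z]
  have hsum : (A.map List.length).sum = C.card * A.length := by
    rw [List.sum_eq_card_nsmul (A.map List.length) C.card
      (by simpa using fun u hu => hlen u hu)]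
    simp [Nat.mul_comm]
  have hcw : CondorcetWinner C B c := by
    refine ⟨hc, fun a ha hac => ?_⟩
    have hperm := reach_profile_mem hrB
    have : numPrefer B c a = B.length := by
      apply numPrefer_eq_length
      intro u hu
      obtain ⟨u', hu', hp⟩ := hperm u hu
      have hau : a ∈ u := hp.mem_iff.1 (((hV u' hu').2 a).2 ha)
      exact hprop u hu a hau hac
    rw [this, ← reach_profile_length hrB]
    omega
  have hmem : t ∈ {k | ∃ B, Reach SwitchProfile k A B ∧ CondorcetWinner C B c} := ⟨B, hrB, hcw⟩
  exact ⟨le_trans (Nat.sInf_le hmem) (hsum ▸ htle), ⟨t, hmem⟩⟩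

end Stage4

section Stage5
set_option linter.unusedSectionVars false
variable {α : Type*} [DecidableEq α]

lemma prefers_filter {pr : α → Bool} {x y : α} (hx : pr x) (hy : pr y) :
    ∀ {u : List α}, x ∈ u → y ∈ u → (prefers (u.filter pr) x y ↔ prefers u x y) := by
  intro u
  induction u with
  | nil => simp
  | cons z u' ih =>
    intro hxu hyu
    rcases eq_or_ne z x with rfl | hzx
    · rw [List.filter_cons_of_pos hx]
      unfold prefers
      rw [List.idxOf_cons_self, List.idxOf_cons_self]
      omega
    · rcases eq_or_ne z y with rfl | hzy
      · rw [List.filter_cons_of_pos hy]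
        unfold prefers
        rw [List.idxOf_cons_self, List.idxOf_cons_self,
          List.idxOf_cons_ne _ hzx, List.idxOf_cons_ne _ hzx]
        omega
      · have hxu' : x ∈ u' := by rcases List.mem_cons.1 hxu with h|h; exact absurd h.symm hzx; exact h
        have hyu' : y ∈ u' := by rcases List.mem_cons.1 hyu with h|h; exact absurd h.symm hzy; exact h
        by_cases hz : pr z
        · rw [List.filter_cons_of_pos hz]
          unfold prefers at *
          rw [List.idxOf_cons_ne _ hzx, List.idxOf_cons_ne _ hzy,
            List.idxOf_cons_ne _ hzx, List.idxOf_cons_ne _ hzy]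
          have := ih hxu' hyu'
          unfold prefers at this
          omega
        · rw [List.filter_cons_of_neg hz]
          unfold prefers
          rw [List.idxOf_cons_ne _ hzx, List.idxOf_cons_ne _ hzy]
          have := ih hxu' hyu'
          unfold prefers at this
          omega

lemma numPrefer_filter_proj {pr : α → Bool} {x y : α} {A : List (List α)}
    (hx : pr x) (hy : pr y) (h : ∀ u ∈ A, x ∈ u ∧ y ∈ u) :
    numPrefer (A.map (List.filter pr)) x y = numPrefer A x y :=
  numPrefer_map_eq (fun u hu => prefers_filter hx hy (h u hu).1 (h u hu).2)

/-- Pointwise comparison of profiles via positions, for bounding `numPrefer`. -/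
lemma numPrefer_le_of_get {A B : List (List α)} {x y : α}
    (hlen : A.length = B.length)
    (h : ∀ i, i < A.length → prefers (B.getD i []) x y → prefers (A.getD i []) x y) :
    numPrefer B x y ≤ numPrefer A x y := by
  apply numPrefer_le_of_forall₂
  rw [List.forall₂_iff_get]
  refine ⟨hlen, fun i h₁ h₂ => ?_⟩
  have := h i h₁
  rwa [List.getD_eq_getElem?_getD, List.getD_eq_getElem?_getD,
    List.getElem?_eq_getElem h₁, List.getElem?_eq_getElem h₂] at this

end Stage5



section Helpers
set_option linter.unusedSectionVars false
variable {α : Type*} [DecidableEq α]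

lemma pref_of {u L R : List α} {x y : α} (hu : u = L ++ R) (hy : y ∈ L) (hx : x ∉ L) :
    prefers u x y := hu ▸ prefers_of_split hy hx

lemma not_pref_of {u L R : List α} {x y : α} (hu : u = L ++ R) (hx : x ∈ L) (hy : y ∉ L) :
    ¬ prefers u x y := hu ▸ not_prefers_of_split hx hy

lemma pref_iff_of {u L R : List α} {x y : α} (hu : u = L ++ R) (hx : x ∉ L) (hy : y ∉ L) :
    (prefers u x y ↔ prefers R x y) := hu ▸ prefers_append_iff hx hy

lemma dist_head {tl sl rest : List α} {c a : α} (hc : c ∉ tl) (ha : a ∉ tl) (hac : a ≠ c)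
    (has : a ∉ sl) :
    sl.length + 1 ≤
      Nat.dist ((tl ++ c :: (sl ++ rest)).idxOf c) ((tl ++ c :: (sl ++ rest)).idxOf a) := by
  rw [indexOf_append_right hc, indexOf_append_right ha, List.idxOf_cons_self,
    List.idxOf_cons_ne _ (Ne.symm hac), indexOf_append_right has]
  simp [Nat.dist]

lemma dist_head0 {sl rest : List α} {d b : α} (hbd : b ≠ d) (hbs : b ∉ sl) :
    sl.length + 1 ≤
      Nat.dist ((d :: (sl ++ rest)).idxOf d) ((d :: (sl ++ rest)).idxOf b) := by
  rw [List.idxOf_cons_self, List.idxOf_cons_ne _ (Ne.symm hbd), indexOf_append_right hbs]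
  simp [Nat.dist]

lemma getD_mem_of_lt {A : List (List α)} {i : ℕ} (h : i < A.length) : A.getD i [] ∈ A := by
  rw [List.getD_eq_getElem?_getD, List.getElem?_eq_getElem h]
  exact List.getElem_mem _

lemma getD_drop {A : List (List α)} {p i : ℕ} : (A.drop p).getD i [] = A.getD (p + i) [] := by
  rw [List.getD_eq_getElem?_getD, List.getD_eq_getElem?_getD, List.getElem?_drop]

end Helpers

section CSide
set_option linter.unusedSectionVars false
set_option maxHeartbeats 1000000
variable {α : Type*} [DecidableEq α]

lemma merge_score_c {C D : Finset α} {c d : α} {V W : List (List α)} {cL dL sL tL : List α}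
    (hok : MergeOK C D c d V W cL dL sL tL) :
    DodgsonScore (MergeCands C D sL tL) (MergeProfile c d V W cL dL sL tL) c =
      DodgsonScore C V c + 1 := by
  obtain ⟨hc, hd, hcd, hdisj, hoddV, hoddW, hWV, hV, hW, hcLnd, hcLmem, hdLnd, hdLmem,
    hsLnd, htLnd, hsLlen, htLlen, hsLf, htLf⟩ := hok
  obtain ⟨a, ha⟩ := hoddV
  obtain ⟨b, hb⟩ := hoddW
  have hba : b ≤ a := by omega
  -- basic membership facts
  have hdC : d ∉ C := fun h => (Finset.disjoint_left.1 hdisj) h hd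
  have hcD : c ∉ D := fun h => (Finset.disjoint_left.1 hdisj) hc h
  have hcs : c ∉ sL := fun h => (hsLf c h).1 hc
  have hct : c ∉ tL := fun h => (htLf c h).1 hc
  have hds : d ∉ sL := fun h => (hsLf d h).2.1 hd
  have hdt : d ∉ tL := fun h => (htLf d h).2 hd
  have hccL : c ∉ cL := fun h => ((hcLmem c).1 h).2 rfl
  have hcdL : c ∉ dL := fun h => hcD ((hdLmem c).1 h).1
  have hdcL : d ∉ cL := fun h => hdC ((hcLmem d).1 h).1
  have hddL : d ∉ dL := fun h => ((hdLmem d).1 h).2 rfl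
  -- abbreviations
  set n := V.length with hn
  set m := W.length with hm
  have h2n : (n + 1) / 2 = a + 1 := by omega
  have h2m : (m + 1) / 2 = b + 1 := by omega
  set pre1 : List α := [d] ++ sL ++ dL ++ tL with hpre1
  set pre4 : List α := tL ++ cL ++ dL ++ sL.reverse with hpre4
  set u3 : List α := tL ++ [c] ++ sL ++ cL ++ dL ++ [d] with hu3
  set u4 : List α := tL ++ cL ++ dL ++ sL.reverse ++ [c, d] with hu4
  set u4' : List α := tL ++ cL ++ dL ++ sL.reverse ++ [d, c] with hu4'
  set u5 : List α := tL ++ cL ++ dL ++ sL ++ [d, c] with hu5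
  set A1 : List (List α) := V.map (fun v => [d] ++ sL ++ dL ++ tL ++ v) with hA1
  set A2 : List (List α) := W.map (fun w => tL ++ [c] ++ sL ++ cL ++ w) with hA2
  set A3 : List (List α) := List.replicate (a - b) u3 with hA3
  set A4 : List (List α) := List.replicate (a + 1) u4 with hA4
  set A5 : List (List α) := List.replicate (b + 1) u5 with hA5
  have hP : MergeProfile c d V W cL dL sL tL = A1 ++ A2 ++ A3 ++ A4 ++ A5 := by
    unfold MergeProfile
    rw [hA1, hA2, hA3, hA4, hA5, ← hn, ← hm, h2n, h2m, hu3, hu4, hu5,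
      show a + 1 - (b + 1) = a - b by omega]
  set Phat := MergeProfile c d V W cL dL sL tL with hPhat
  have hA1len : A1.length = n := by simp [hA1, hn]
  have hA2len : A2.length = m := by simp [hA2, hm]
  have hNlen : Phat.length = 4 * a + 2 * b + 4 := by
    rw [hP]; simp [hA1, hA2, hA3, hA4, hA5, ← hn, ← hm]; omega
  -- voter-type preference facts (independent of the V/W component)
  have hF1cd : ∀ v : List α, prefers ([d] ++ sL ++ dL ++ tL ++ v) c d :=
    fun v => pref_of
      (show [d] ++ sL ++ dL ++ tL ++ v = [d] ++ (sL ++ dL ++ tL ++ v) by simp)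
      (by simp) (by simp [hcd])
  have hF1ca : ∀ x, x ∈ cL → ∀ v : List α,
      (prefers ([d] ++ sL ++ dL ++ tL ++ v) c x ↔ prefers v c x) := by
    intro x hx v
    obtain ⟨hxC, hxc⟩ := (hcLmem x).1 hx
    refine pref_iff_of
      (show [d] ++ sL ++ dL ++ tL ++ v = ([d] ++ sL ++ dL ++ tL) ++ v by simp) ?_ ?_
    · simp only [List.mem_append, List.mem_singleton]
      push_neg
      exact ⟨⟨⟨hcd, hcs⟩, hcdL⟩, hct⟩
    · simp only [List.mem_append, List.mem_singleton]
      push_neg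
      refine ⟨⟨⟨fun h => hdC (h ▸ hxC), fun h => (hsLf x h).1 hxC⟩,
        fun h => (Finset.disjoint_left.1 hdisj) hxC ((hdLmem x).1 h).1⟩,
        fun h => (htLf x h).1 hxC⟩
  have hF1cb : ∀ x, x ∈ dL → ∀ v : List α, prefers ([d] ++ sL ++ dL ++ tL ++ v) c x := by
    intro x hx v
    refine pref_of
      (show [d] ++ sL ++ dL ++ tL ++ v = ([d] ++ sL ++ dL) ++ (tL ++ v) by simp)
      (by simp [hx]) ?_
    simp only [List.mem_append, List.mem_singleton]
    push_neg
    exact ⟨⟨hcd, hcs⟩, hcdL⟩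
  have hF1cs : ∀ x, x ∈ sL → ∀ v : List α, prefers ([d] ++ sL ++ dL ++ tL ++ v) c x := by
    intro x hx v
    refine pref_of
      (show [d] ++ sL ++ dL ++ tL ++ v = ([d] ++ sL) ++ (dL ++ tL ++ v) by simp)
      (by simp [hx]) (by simp [hcd, hcs])
  have hF1ct : ∀ x, x ∈ tL → ∀ v : List α, prefers ([d] ++ sL ++ dL ++ tL ++ v) c x := by
    intro x hx v
    refine pref_of
      (show [d] ++ sL ++ dL ++ tL ++ v = ([d] ++ sL ++ dL ++ tL) ++ v by simp)
      (by simp [hx]) ?_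
    simp only [List.mem_append, List.mem_singleton]
    push_neg
    exact ⟨⟨⟨hcd, hcs⟩, hcdL⟩, hct⟩
  -- type (b)/(c) voters : c is beaten by everything outside tL
  have hF2neg : ∀ (x : α) (R : List α), x ∉ tL → x ≠ c →
      ¬ prefers (tL ++ [c] ++ sL ++ R) c x := by
    intro x R hxt hxc
    refine not_pref_of
      (show tL ++ [c] ++ sL ++ R = (tL ++ [c]) ++ (sL ++ R) by simp)
      (by simp) (by simp [hxt, hxc])
  have hF2t : ∀ (x : α) (R : List α), x ∈ tL → prefers (tL ++ [c] ++ sL ++ R) c x := by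
    intro x R hxt
    refine pref_of
      (show tL ++ [c] ++ sL ++ R = tL ++ ([c] ++ sL ++ R) by simp)
      hxt hct
  -- type (d)/(e) voters: c beats everything in the prefix
  have hcpre4 : c ∉ pre4 := by
    simp only [hpre4, List.mem_append, List.mem_reverse]
    push_neg
    exact ⟨⟨⟨hct, hccL⟩, hcdL⟩, hcs⟩
  have hdpre4 : d ∉ pre4 := by
    simp only [hpre4, List.mem_append, List.mem_reverse]
    push_neg
    exact ⟨⟨⟨hdt, hdcL⟩, hddL⟩, hds⟩
  have hF4pos : ∀ x ∈ pre4, prefers u4 c x := by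
    intro x hx
    exact pref_of (show u4 = pre4 ++ [c, d] by rw [hu4, hpre4]) hx hcpre4
  have hF4'pos : ∀ x ∈ pre4, prefers u4' c x := by
    intro x hx
    exact pref_of (show u4' = pre4 ++ [d, c] by rw [hu4', hpre4]) hx hcpre4
  have hF4negd : ¬ prefers u4 c d := by
    refine not_pref_of (show u4 = (pre4 ++ [c]) ++ [d] by rw [hu4, hpre4]; simp)
      (by simp) ?_
    simp only [List.mem_append, List.mem_singleton]
    push_neg
    exact ⟨hdpre4, fun h => hcd h.symm⟩
  have hF4'd : prefers u4' c d := by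
    refine pref_of (show u4' = (pre4 ++ [d]) ++ [c] by rw [hu4', hpre4]; simp)
      (by simp) ?_
    simp only [List.mem_append, List.mem_singleton]
    push_neg
    exact ⟨hcpre4, hcd⟩
  have hcpre5 : c ∉ tL ++ cL ++ dL ++ sL := by
    simp only [List.mem_append]
    push_neg
    exact ⟨⟨⟨hct, hccL⟩, hcdL⟩, hcs⟩
  have hF5pos : ∀ x, (x ∈ tL ++ cL ++ dL ++ sL ∨ x = d) → prefers u5 c x := by
    intro x hx
    refine pref_of (show u5 = (tL ++ cL ++ dL ++ sL ++ [d]) ++ [c] by rw [hu5]; simp) ?_ ?_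
    · simp only [List.mem_append, List.mem_singleton] at hx ⊢
      tauto
    · simp only [List.mem_append, List.mem_singleton]
      push_neg
      simp only [List.mem_append] at hcpre5
      push_neg at hcpre5
      exact ⟨⟨⟨⟨hcpre5.1.1.1, hcpre5.1.1.2⟩, hcpre5.1.2⟩, hcpre5.2⟩, hcd⟩

  -- ===================== upper bound =====================
  have hCin : c ∈ MergeCands C D sL tL := by
    simp [MergeCands, hc]
  have hVpos : 0 < V.length := by omega
  obtain ⟨hUb, hne⟩ := dodgsonScore_bound hc hV hVpos
  obtain ⟨V', hreachV, hcwV⟩ := dodgsonScore_witness hne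
  have hV'len : V'.length = n := (reach_profile_length hreachV).symm
  set A1' : List (List α) := V'.map (fun v => [d] ++ sL ++ dL ++ tL ++ v) with hA1'
  have hA1'len : A1'.length = n := by simp [hA1', hV'len]
  set Q1 : List (List α) := A1' ++ (A2 ++ (A3 ++ (A4 ++ A5))) with hQ1
  set Q2 : List (List α) :=
    A1' ++ (A2 ++ (A3 ++ (u4' :: (List.replicate a u4 ++ A5)))) with hQ2
  have hreach1 : Reach SwitchProfile (DodgsonScore C V c) Phat Q1 := by
    have h0 : Reach SwitchProfile (DodgsonScore C V c)
        (V.map (pre1 ++ ·)) (V'.map (pre1 ++ ·)) := reach_map_prefix hreachV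
    have h1 : Reach SwitchProfile (DodgsonScore C V c)
        ([] ++ V.map (pre1 ++ ·) ++ (A2 ++ (A3 ++ (A4 ++ A5))))
        ([] ++ V'.map (pre1 ++ ·) ++ (A2 ++ (A3 ++ (A4 ++ A5)))) := reach_pad h0
    have e1 : [] ++ V.map (pre1 ++ ·) ++ (A2 ++ (A3 ++ (A4 ++ A5))) = Phat := by
      rw [hP]
      simp [List.append_assoc, hA1, hpre1]
    have e2 : [] ++ V'.map (pre1 ++ ·) ++ (A2 ++ (A3 ++ (A4 ++ A5))) = Q1 := by
      rw [hQ1]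
      simp [List.append_assoc, hA1', hpre1]
    rwa [e1, e2] at h1
  have hstep : SwitchProfile Q1 Q2 := by
    refine ⟨A1' ++ (A2 ++ A3), List.replicate a u4 ++ A5, u4, u4', ?_, ?_,
      pre4, [], c, d, by rw [hu4, hpre4], by rw [hu4', hpre4]⟩
    · rw [hQ1, hA4, List.replicate_succ]
      simp [List.append_assoc]
    · rw [hQ2]
      simp [List.append_assoc]
  have hreach2 : Reach SwitchProfile (DodgsonScore C V c + 1) Phat Q2 :=
    reach_trans hreach1 (reach_one hstep)
  have hQ2len : Q2.length = 4 * a + 2 * b + 4 := by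
    simp [hQ2, hA1'len, hA2len, hA3, hA4, hA5, ← hm]
    omega
  have hnumQ2 : ∀ x : α, numPrefer Q2 c x =
      numPrefer A1' c x + (numPrefer A2 c x + (numPrefer A3 c x +
        ((if prefers u4' c x then 1 else 0) +
          (numPrefer (List.replicate a u4) c x + numPrefer A5 c x)))) := by
    intro x
    rw [hQ2, numPrefer_append, numPrefer_append, numPrefer_append, numPrefer_cons,
      numPrefer_append]
  have hcw2 : CondorcetWinner (MergeCands C D sL tL) Q2 c := by
    refine ⟨hCin, fun x hx hxc => ?_⟩
    rw [hQ2len]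
    have hx4 : x ∈ MergeCands C D sL tL := hx
    have hxcases : x ∈ C ∨ x ∈ D ∨ x ∈ sL ∨ x ∈ tL := by
      simpa [MergeCands, Finset.mem_union, List.mem_toFinset, or_assoc] using hx4
    have key : 2 * a + b + 3 ≤ numPrefer Q2 c x := by
      rcases hxcases with hxC | hxD | hxS | hxT
      · -- x ∈ C, x ≠ c
        have hxcL : x ∈ cL := (hcLmem x).2 ⟨hxC, hxc⟩
        have h1 : numPrefer A1' c x = numPrefer V' c x :=
          numPrefer_map_eq (fun v' _ => hF1ca x hxcL v')
        have hVx : a + 1 ≤ numPrefer V' c x := by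
          have := hcwV.2 x hxC hxc
          rw [hV'len] at this
          omega
        have h2 : numPrefer A2 c x = 0 := by
          refine numPrefer_map_eq_zero (fun w hw => ?_)
          have := hF2neg x (cL ++ w) (fun h => (htLf x h).1 hxC) hxc
          simpa [List.append_assoc] using this
        have h3 : numPrefer A3 c x = 0 := by
          refine numPrefer_replicate_zero ?_
          have := hF2neg x (cL ++ dL ++ [d]) (fun h => (htLf x h).1 hxC) hxc
          simpa [hu3, List.append_assoc] using this
        have hxpre4 : x ∈ pre4 := by simp [hpre4, hxcL]
        have h4 : (if prefers u4' c x then 1 else 0) = 1 := if_pos (hF4'pos x hxpre4)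
        have h5 : numPrefer (List.replicate a u4) c x = a :=
          numPrefer_replicate (hF4pos x hxpre4)
        have h6 : numPrefer A5 c x = b + 1 := by
          refine numPrefer_replicate (hF5pos x (Or.inl ?_))
          simp [hxcL]
        rw [hnumQ2, h1, h2, h3, h4, h5, h6]
        omega
      · rcases eq_or_ne x d with h | hxd
        · rw [h]
          have h1 : numPrefer A1' c d = n := by
            rw [numPrefer_map_eq_length (fun v' _ => hF1cd v'), hV'len]
          have h2 : numPrefer A2 c d = 0 := by
            refine numPrefer_map_eq_zero (fun w hw => ?_)
            have := hF2neg d (cL ++ w) hdt (fun h => hcd h.symm)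
            simpa [List.append_assoc] using this
          have h3 : numPrefer A3 c d = 0 := by
            refine numPrefer_replicate_zero ?_
            have := hF2neg d (cL ++ dL ++ [d]) hdt (fun h => hcd h.symm)
            simpa [hu3, List.append_assoc] using this
          have h4 : (if prefers u4' c d then 1 else 0) = 1 := if_pos hF4'd
          have h5 : numPrefer (List.replicate a u4) c d = 0 :=
            numPrefer_replicate_zero hF4negd
          have h6 : numPrefer A5 c d = b + 1 :=
            numPrefer_replicate (hF5pos d (Or.inr rfl))
          rw [hnumQ2, h1, h2, h3, h4, h5, h6]
          omega
        · have hxdL : x ∈ dL := (hdLmem x).2 ⟨hxD, hxd⟩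
          have hxt : x ∉ tL := fun h => (htLf x h).2 hxD
          have hxc' : x ≠ c := fun h => hcD (h ▸ hxD)
          have h1 : numPrefer A1' c x = n := by
            rw [numPrefer_map_eq_length (fun v' _ => hF1cb x hxdL v'), hV'len]
          have h2 : numPrefer A2 c x = 0 := by
            refine numPrefer_map_eq_zero (fun w hw => ?_)
            have := hF2neg x (cL ++ w) hxt hxc'
            simpa [List.append_assoc] using this
          have h3 : numPrefer A3 c x = 0 := by
            refine numPrefer_replicate_zero ?_
            have := hF2neg x (cL ++ dL ++ [d]) hxt hxc'
            simpa [hu3, List.append_assoc] using this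
          have hxpre4 : x ∈ pre4 := by simp [hpre4, hxdL]
          have h4 : (if prefers u4' c x then 1 else 0) = 1 := if_pos (hF4'pos x hxpre4)
          have h5 : numPrefer (List.replicate a u4) c x = a :=
            numPrefer_replicate (hF4pos x hxpre4)
          have h6 : numPrefer A5 c x = b + 1 := by
            refine numPrefer_replicate (hF5pos x (Or.inl ?_))
            simp [hxdL]
          rw [hnumQ2, h1, h2, h3, h4, h5, h6]
          omega
      · have hxt : x ∉ tL := (hsLf x hxS).2.2
        have hxc' : x ≠ c := fun h => hcs (h ▸ hxS)
        have h1 : numPrefer A1' c x = n := by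
          rw [numPrefer_map_eq_length (fun v' _ => hF1cs x hxS v'), hV'len]
        have h2 : numPrefer A2 c x = 0 := by
          refine numPrefer_map_eq_zero (fun w hw => ?_)
          have := hF2neg x (cL ++ w) hxt hxc'
          simpa [List.append_assoc] using this
        have h3 : numPrefer A3 c x = 0 := by
          refine numPrefer_replicate_zero ?_
          have := hF2neg x (cL ++ dL ++ [d]) hxt hxc'
          simpa [hu3, List.append_assoc] using this
        have hxpre4 : x ∈ pre4 := by simp [hpre4, hxS]
        have h4 : (if prefers u4' c x then 1 else 0) = 1 := if_pos (hF4'pos x hxpre4)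
        have h5 : numPrefer (List.replicate a u4) c x = a :=
          numPrefer_replicate (hF4pos x hxpre4)
        have h6 : numPrefer A5 c x = b + 1 := by
          refine numPrefer_replicate (hF5pos x (Or.inl ?_))
          simp [hxS]
        rw [hnumQ2, h1, h2, h3, h4, h5, h6]
        omega
      · have h1 : numPrefer A1' c x = n := by
          rw [numPrefer_map_eq_length (fun v' _ => hF1ct x hxT v'), hV'len]
        have h2 : numPrefer A2 c x = m := by
          rw [numPrefer_map_eq_length (fun w hw => by
            simpa [List.append_assoc] using hF2t x (cL ++ w) hxT), ← hm]
        have h3 : numPrefer A3 c x = a - b := by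
          refine numPrefer_replicate ?_
          have := hF2t x (cL ++ dL ++ [d]) hxT
          simpa [hu3, List.append_assoc] using this
        have hxpre4 : x ∈ pre4 := by simp [hpre4, hxT]
        have h4 : (if prefers u4' c x then 1 else 0) = 1 := if_pos (hF4'pos x hxpre4)
        have h5 : numPrefer (List.replicate a u4) c x = a :=
          numPrefer_replicate (hF4pos x hxpre4)
        have h6 : numPrefer A5 c x = b + 1 := by
          refine numPrefer_replicate (hF5pos x (Or.inl ?_))
          simp [hxT]
        rw [hnumQ2, h1, h2, h3, h4, h5, h6]
        omega
    omega
  have hupper : DodgsonScore (MergeCands C D sL tL) Phat c ≤ DodgsonScore C V c + 1 :=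
    dodgsonScore_le hreach2 hcw2

  -- ===================== lower bound =====================
  have hUb' : DodgsonScore C V c ≤ C.card * n := by rw [hn]; exact hUb
  set pr : α → Bool := fun z => decide (z ∈ C) with hpr
  have hprc : pr c = true := by simp [hpr, hc]
  have hP' : Phat = A1 ++ (A2 ++ (A3 ++ (A4 ++ A5))) := by
    rw [hP]; simp [List.append_assoc]
  have hPtake : Phat.take n = A1 := by
    rw [hP']; exact List.take_left' hA1len
  have hPdrop : Phat.drop n = A2 ++ (A3 ++ (A4 ++ A5)) := by
    rw [hP']; exact List.drop_left' hA1len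
  have hprojP : projBlock 0 n C Phat = V := by
    unfold projBlock
    rw [List.drop_zero, hPtake, hA1, List.map_map]
    rw [List.map_congr_left (g := id) ?_, List.map_id]
    intro v hv
    simp only [Function.comp_apply, id_eq]
    rw [List.filter_append, List.filter_append, List.filter_append, List.filter_append]
    have e0 : List.filter (fun z => decide (z ∈ C)) [d] = [] := by simp [hdC]
    have e1 : List.filter (fun z => decide (z ∈ C)) sL = [] :=
      List.filter_eq_nil_iff.mpr (fun z hz => by simpa using (hsLf z hz).1)
    have e2 : List.filter (fun z => decide (z ∈ C)) dL = [] :=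
      List.filter_eq_nil_iff.mpr
        (fun z hz => by simpa using Finset.disjoint_right.1 hdisj ((hdLmem z).1 hz).1)
    have e3 : List.filter (fun z => decide (z ∈ C)) tL = [] :=
      List.filter_eq_nil_iff.mpr (fun z hz => by simpa using (htLf z hz).1)
    have e4 : List.filter (fun z => decide (z ∈ C)) v = v :=
      List.filter_eq_self.mpr (fun z hz => by simpa using ((hV v hv).2 z).1 hz)
    rw [e0, e1, e2, e3, e4]
    simp
  have hPall : ∀ u ∈ Phat, ∀ z ∈ C, z ∈ u := by
    intro u hu z hz
    rw [hP] at hu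
    simp only [List.mem_append, hA1, hA2, hA3, hA4, hA5, List.mem_map,
      List.mem_replicate] at hu
    have hzcases : z = c ∨ z ∈ cL := by
      rcases eq_or_ne z c with h | h
      · exact Or.inl h
      · exact Or.inr ((hcLmem z).2 ⟨hz, h⟩)
    rcases hu with ((((⟨v, hv, rfl⟩ | ⟨w, hw, rfl⟩) | ⟨_, rfl⟩) | ⟨_, rfl⟩) | ⟨_, rfl⟩)
    · have : z ∈ v := ((hV v hv).2 z).2 hz
      simp only [List.mem_append]
      tauto
    · simp only [List.mem_append, List.mem_singleton]
      tauto
    · rw [hu3]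
      simp only [List.mem_append, List.mem_singleton]
      tauto
    · rw [hu4]
      simp only [List.mem_append, List.mem_singleton, List.mem_cons, List.mem_reverse]
      tauto
    · rw [hu5]
      simp only [List.mem_append, List.mem_singleton, List.mem_cons]
      tauto
  set SC := {k | ∃ B, Reach SwitchProfile k Phat B ∧
      CondorcetWinner (MergeCands C D sL tL) B c} with hSC
  have hlow : ∀ k ∈ SC, DodgsonScore C V c + 1 ≤ k := by
    intro k hk
    obtain ⟨Q, hre, hcw⟩ := hk
    by_cases hbig : C.card * n + 1 ≤ k
    · omega
    push_neg at hbig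
    have hk2 : 2 * k ≤ sL.length := by
      rw [hsLlen]
      omega
    have hQlen : Q.length = 4 * a + 2 * b + 4 := by
      rw [← reach_profile_length hre, hNlen]
    obtain ⟨j, hjk, hreachproj, hnum⟩ :=
      KL (lo := 0) (len := n) (s := C) (x := c) (y := d) hdC hre
    -- initial c-d margin
    have hPA : numPrefer Phat c d = 2 * a + b + 2 := by
      rw [hP, numPrefer_append, numPrefer_append, numPrefer_append, numPrefer_append]
      have h1 : numPrefer A1 c d = n :=
        (numPrefer_map_eq_length (fun v _ => hF1cd v)).trans (by rw [hn])
      have h2 : numPrefer A2 c d = 0 := by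
        refine numPrefer_map_eq_zero (fun w hw => ?_)
        have := hF2neg d (cL ++ w) hdt (fun h => hcd h.symm)
        simpa [List.append_assoc] using this
      have h3 : numPrefer A3 c d = 0 := by
        refine numPrefer_replicate_zero ?_
        have := hF2neg d (cL ++ dL ++ [d]) hdt (fun h => hcd h.symm)
        simpa [hu3, List.append_assoc] using this
      have h4 : numPrefer A4 c d = 0 := numPrefer_replicate_zero hF4negd
      have h5 : numPrefer A5 c d = b + 1 := numPrefer_replicate (hF5pos d (Or.inr rfl))
      rw [h1, h2, h3, h4, h5]
      omega
    have hdin : d ∈ MergeCands C D sL tL := by simp [MergeCands, hd]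
    have hQcd := hcw.2 d hdin (fun h => hcd h.symm)
    rw [hQlen] at hQcd
    have hj1 : j + 1 ≤ k := by
      rw [hPA] at hnum
      omega
    -- Condorcet for the projected V-block
    have hcwproj : CondorcetWinner C (projBlock 0 n C Q) c := by
      refine ⟨hc, fun x hxC hxc => ?_⟩
      have hxcL : x ∈ cL := (hcLmem x).2 ⟨hxC, hxc⟩
      have hxt : x ∉ tL := fun h => (htLf x h).1 hxC
      have hxs : x ∉ sL := fun h => (hsLf x h).1 hxC
      have hxin : x ∈ MergeCands C D sL tL := by simp [MergeCands, hxC]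
      have hQcx := hcw.2 x hxin hxc
      rw [hQlen] at hQcx
      -- split into the V block and the rest
      have hsplitQ : numPrefer Q c x
          = numPrefer (Q.take n) c x + numPrefer (Q.drop n) c x := by
        conv_lhs => rw [← List.take_append_drop n Q]
        rw [numPrefer_append]
      -- the rest cannot improve
      have hdropbound : numPrefer (Q.drop n) c x ≤ numPrefer (Phat.drop n) c x := by
        refine numPrefer_le_of_get ?_ ?_
        · rw [List.length_drop, List.length_drop, hNlen, hQlen]
        · intro i hi hp
          rw [List.length_drop, hNlen] at hi
          rw [getD_drop] at hp ⊢
          obtain ⟨t, htk, hrt⟩ := reach_profile_getD hre (n + i)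
          have hmemu : Phat.getD (n + i) [] ∈ Phat.drop n := by
            rw [← getD_drop]
            exact getD_mem_of_lt (by rw [List.length_drop, hNlen]; omega)
          rw [hPdrop] at hmemu
          simp only [List.mem_append, hA2, hA3, hA4, hA5, List.mem_map,
            List.mem_replicate] at hmemu
          rcases hmemu with ⟨w, hw, hequ⟩ | ⟨_, hequ⟩ | ⟨_, hequ⟩ | ⟨_, hequ⟩
          · -- type (b) voter : use the distance argument
            have heq2 : Phat.getD (n + i) [] = tL ++ c :: (sL ++ (cL ++ w)) := by
              rw [← hequ]; simp [List.append_assoc]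
            have hfar : 2 * t < Nat.dist ((Phat.getD (n + i) []).idxOf c)
                ((Phat.getD (n + i) []).idxOf x) := by
              rw [heq2]
              have := dist_head (rest := cL ++ w) (c := c) (a := x) hct hxt hxc hxs
              omega
            exact (prefers_of_reach_far hrt hfar).1 hp
          · have heq2 : Phat.getD (n + i) [] = tL ++ c :: (sL ++ (cL ++ dL ++ [d])) := by
              rw [hequ, hu3]; simp [List.append_assoc]
            have hfar : 2 * t < Nat.dist ((Phat.getD (n + i) []).idxOf c)
                ((Phat.getD (n + i) []).idxOf x) := by
              rw [heq2]
              have := dist_head (rest := cL ++ dL ++ [d]) (c := c) (a := x) hct hxt hxc hxs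
              omega
            exact (prefers_of_reach_far hrt hfar).1 hp
          · rw [hequ]
            exact hF4pos x (by simp [hpre4, hxcL])
          · rw [hequ]
            exact hF5pos x (Or.inl (by simp [hxcL]))
      -- the initial rest margin
      have hdropinit : numPrefer (Phat.drop n) c x = (a + 1) + (b + 1) := by
        rw [hPdrop, numPrefer_append, numPrefer_append, numPrefer_append]
        have h2 : numPrefer A2 c x = 0 := by
          refine numPrefer_map_eq_zero (fun w hw => ?_)
          have := hF2neg x (cL ++ w) hxt hxc
          simpa [List.append_assoc] using this
        have h3 : numPrefer A3 c x = 0 := by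
          refine numPrefer_replicate_zero ?_
          have := hF2neg x (cL ++ dL ++ [d]) hxt hxc
          simpa [hu3, List.append_assoc] using this
        have h4 : numPrefer A4 c x = a + 1 :=
          numPrefer_replicate (hF4pos x (by simp [hpre4, hxcL]))
        have h5 : numPrefer A5 c x = b + 1 :=
          numPrefer_replicate (hF5pos x (Or.inl (by simp [hxcL])))
        rw [h2, h3, h4, h5]
        omega
      -- the projection preserves the V-block margin
      have hprojQ : numPrefer (projBlock 0 n C Q) c x = numPrefer (Q.take n) c x := by
        unfold projBlock
        rw [List.drop_zero]
        refine numPrefer_filter_proj (by simp [hc]) (by simp [hxC]) ?_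
        intro u hu
        obtain ⟨u0, hu0, hperm⟩ := reach_profile_mem hre u (List.mem_of_mem_take hu)
        exact ⟨hperm.mem_iff.1 (hPall u0 hu0 c hc), hperm.mem_iff.1 (hPall u0 hu0 x hxC)⟩
      have hlenproj : (projBlock 0 n C Q).length = n := by
        unfold projBlock
        rw [List.length_map, List.drop_zero, List.length_take, hQlen]
        omega
      rw [hlenproj, hprojQ]
      omega
    rw [hprojP] at hreachproj
    have hscore : DodgsonScore C V c ≤ j := dodgsonScore_le hreachproj hcwproj
    omega
  have hne2 : SC.Nonempty := ⟨DodgsonScore C V c + 1, Q2, hreach2, hcw2⟩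
  have hdef : DodgsonScore (MergeCands C D sL tL) Phat c = sInf SC := rfl
  have hfin := hlow _ (Nat.sInf_mem hne2)
  omega

end CSide

section DSide
set_option linter.unusedSectionVars false
set_option maxHeartbeats 1000000
variable {α : Type*} [DecidableEq α]

lemma getD_take {A : List (List α)} {p i : ℕ} (h : i < p) :
    (A.take p).getD i [] = A.getD i [] := by
  rw [List.getD_eq_getElem?_getD, List.getD_eq_getElem?_getD, List.getElem?_take]
  simp [h]

lemma merge_score_d {C D : Finset α} {c d : α} {V W : List (List α)} {cL dL sL tL : List α}
    (hok : MergeOK C D c d V W cL dL sL tL) :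
    DodgsonScore (MergeCands C D sL tL) (MergeProfile c d V W cL dL sL tL) d =
      DodgsonScore D W d + 1 := by
  obtain ⟨hc, hd, hcd, hdisj, hoddV, hoddW, hWV, hV, hW, hcLnd, hcLmem, hdLnd, hdLmem,
    hsLnd, htLnd, hsLlen, htLlen, hsLf, htLf⟩ := hok
  obtain ⟨a, ha⟩ := hoddV
  obtain ⟨b, hb⟩ := hoddW
  have hba : b ≤ a := by omega
  -- basic membership facts
  have hdC : d ∉ C := fun h => (Finset.disjoint_left.1 hdisj) h hd
  have hcD : c ∉ D := fun h => (Finset.disjoint_left.1 hdisj) hc h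
  have hcs : c ∉ sL := fun h => (hsLf c h).1 hc
  have hct : c ∉ tL := fun h => (htLf c h).1 hc
  have hds : d ∉ sL := fun h => (hsLf d h).2.1 hd
  have hdt : d ∉ tL := fun h => (htLf d h).2 hd
  have hccL : c ∉ cL := fun h => ((hcLmem c).1 h).2 rfl
  have hcdL : c ∉ dL := fun h => hcD ((hdLmem c).1 h).1
  have hdcL : d ∉ cL := fun h => hdC ((hcLmem d).1 h).1
  have hddL : d ∉ dL := fun h => ((hdLmem d).1 h).2 rfl
  have hdc : d ≠ c := fun h => hcd h.symm
  -- abbreviations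
  set n := V.length with hn
  set m := W.length with hm
  have h2n : (n + 1) / 2 = a + 1 := by omega
  have h2m : (m + 1) / 2 = b + 1 := by omega
  set pre2 : List α := tL ++ [c] ++ sL ++ cL with hpre2
  set pre4 : List α := tL ++ cL ++ dL ++ sL.reverse with hpre4
  set pre5 : List α := tL ++ cL ++ dL ++ sL with hpre5
  set u3 : List α := tL ++ [c] ++ sL ++ cL ++ dL ++ [d] with hu3
  set u4 : List α := tL ++ cL ++ dL ++ sL.reverse ++ [c, d] with hu4
  set u5 : List α := tL ++ cL ++ dL ++ sL ++ [d, c] with hu5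
  set u5' : List α := tL ++ cL ++ dL ++ sL ++ [c, d] with hu5'
  set A1 : List (List α) := V.map (fun v => [d] ++ sL ++ dL ++ tL ++ v) with hA1
  set A2 : List (List α) := W.map (fun w => tL ++ [c] ++ sL ++ cL ++ w) with hA2
  set A3 : List (List α) := List.replicate (a - b) u3 with hA3
  set A4 : List (List α) := List.replicate (a + 1) u4 with hA4
  set A5 : List (List α) := List.replicate (b + 1) u5 with hA5
  have hP : MergeProfile c d V W cL dL sL tL = A1 ++ A2 ++ A3 ++ A4 ++ A5 := by
    unfold MergeProfile
    rw [hA1, hA2, hA3, hA4, hA5, ← hn, ← hm, h2n, h2m, hu3, hu4, hu5,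
      show a + 1 - (b + 1) = a - b by omega]
  set Phat := MergeProfile c d V W cL dL sL tL with hPhat
  have hA1len : A1.length = n := by simp [hA1, hn]
  have hA2len : A2.length = m := by simp [hA2, hm]
  have hNlen : Phat.length = 4 * a + 2 * b + 4 := by
    rw [hP]; simp [hA1, hA2, hA3, hA4, hA5, ← hn, ← hm]; omega
  -- d-perspective preference facts
  have hG1neg : ∀ (x : α), x ≠ d → ∀ v : List α,
      ¬ prefers ([d] ++ sL ++ dL ++ tL ++ v) d x := by
    intro x hx v
    exact not_pref_of
      (show [d] ++ sL ++ dL ++ tL ++ v = [d] ++ (sL ++ dL ++ tL ++ v) by simp)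
      (by simp) (by simp [hx])
  have hdpre2 : d ∉ pre2 := by
    simp only [hpre2, List.mem_append, List.mem_singleton]
    push_neg
    exact ⟨⟨⟨hdt, hdc⟩, hds⟩, hdcL⟩
  have hG2pos : ∀ (x : α) (R : List α), x ∈ pre2 → prefers (pre2 ++ R) d x := by
    intro x R hx
    exact pref_of rfl hx hdpre2
  have hG2b : ∀ (x : α), x ∈ D → x ≠ d → ∀ (R : List α),
      (prefers (pre2 ++ R) d x ↔ prefers R d x) := by
    intro x hxD hxd R
    refine pref_iff_of rfl hdpre2 ?_
    simp only [hpre2, List.mem_append, List.mem_singleton]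
    push_neg
    exact ⟨⟨⟨fun h => (htLf x h).2 hxD, fun h => hcD (h ▸ hxD)⟩,
      fun h => (hsLf x h).2.1 hxD⟩, fun h => (Finset.disjoint_left.1 hdisj) ((hcLmem x).1 h).1 hxD⟩
  have hddL' : d ∉ pre2 ++ dL := by
    simp only [List.mem_append]
    push_neg
    exact ⟨hdpre2, hddL⟩
  have hG3 : ∀ (x : α), (x ∈ pre2 ∨ x ∈ dL) → prefers u3 d x := by
    intro x hx
    refine pref_of (show u3 = (pre2 ++ dL) ++ [d] by rw [hu3, hpre2]) ?_ hddL'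
    simp only [List.mem_append]
    exact hx
  have hdpre4 : d ∉ pre4 := by
    simp only [hpre4, List.mem_append, List.mem_reverse]
    push_neg
    exact ⟨⟨⟨hdt, hdcL⟩, hddL⟩, hds⟩
  have hG4 : ∀ (x : α), (x ∈ pre4 ∨ x = c) → prefers u4 d x := by
    intro x hx
    refine pref_of (show u4 = (pre4 ++ [c]) ++ [d] by rw [hu4, hpre4]; simp) ?_ ?_
    · simp only [List.mem_append, List.mem_singleton]
      exact hx
    · simp only [List.mem_append, List.mem_singleton]
      push_neg
      exact ⟨hdpre4, hdc⟩
  have hdpre5 : d ∉ pre5 := by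
    simp only [hpre5, List.mem_append]
    push_neg
    exact ⟨⟨⟨hdt, hdcL⟩, hddL⟩, hds⟩
  have hcpre5 : c ∉ pre5 := by
    simp only [hpre5, List.mem_append]
    push_neg
    exact ⟨⟨⟨hct, hccL⟩, hcdL⟩, hcs⟩
  have hG5pos : ∀ (x : α), x ∈ pre5 → prefers u5 d x := by
    intro x hx
    exact pref_of (show u5 = pre5 ++ [d, c] by rw [hu5, hpre5]) hx hdpre5
  have hG5negc : ¬ prefers u5 d c := by
    refine not_pref_of (show u5 = (pre5 ++ [d]) ++ [c] by rw [hu5, hpre5]; simp)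
      (by simp) ?_
    simp only [List.mem_append, List.mem_singleton]
    push_neg
    exact ⟨hcpre5, hcd⟩
  have hG5'c : prefers u5' d c := by
    refine pref_of (show u5' = (pre5 ++ [c]) ++ [d] by rw [hu5', hpre5]; simp)
      (by simp) ?_
    simp only [List.mem_append, List.mem_singleton]
    push_neg
    exact ⟨hdpre5, hdc⟩
  have hG5'pos : ∀ (x : α), x ∈ pre5 → prefers u5' d x := by
    intro x hx
    exact pref_of (show u5' = pre5 ++ [c, d] by rw [hu5', hpre5]) hx hdpre5

  -- ===================== upper bound =====================
  have hDin : d ∈ MergeCands C D sL tL := by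
    simp [MergeCands, hd]
  have hWpos : 0 < W.length := by omega
  obtain ⟨hUb, hne⟩ := dodgsonScore_bound hd hW hWpos
  obtain ⟨W', hreachW, hcwW⟩ := dodgsonScore_witness hne
  have hW'len : W'.length = m := (reach_profile_length hreachW).symm
  set A2' : List (List α) := W'.map (fun w => tL ++ [c] ++ sL ++ cL ++ w) with hA2'
  have hA2'len : A2'.length = m := by simp [hA2', hW'len]
  set Q1 : List (List α) := A1 ++ (A2' ++ (A3 ++ (A4 ++ A5))) with hQ1
  set Q2 : List (List α) :=
    A1 ++ (A2' ++ (A3 ++ (A4 ++ (u5' :: List.replicate b u5)))) with hQ2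
  have hreach1 : Reach SwitchProfile (DodgsonScore D W d) Phat Q1 := by
    have h0 : Reach SwitchProfile (DodgsonScore D W d)
        (W.map (pre2 ++ ·)) (W'.map (pre2 ++ ·)) := reach_map_prefix hreachW
    have h1 : Reach SwitchProfile (DodgsonScore D W d)
        (A1 ++ W.map (pre2 ++ ·) ++ (A3 ++ (A4 ++ A5)))
        (A1 ++ W'.map (pre2 ++ ·) ++ (A3 ++ (A4 ++ A5))) := reach_pad h0
    have e1 : A1 ++ W.map (pre2 ++ ·) ++ (A3 ++ (A4 ++ A5)) = Phat := by
      rw [hP]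
      simp [List.append_assoc, hA2, hpre2]
    have e2 : A1 ++ W'.map (pre2 ++ ·) ++ (A3 ++ (A4 ++ A5)) = Q1 := by
      rw [hQ1]
      simp [List.append_assoc, hA2', hpre2]
    rwa [e1, e2] at h1
  have hstep : SwitchProfile Q1 Q2 := by
    refine ⟨A1 ++ (A2' ++ (A3 ++ A4)), List.replicate b u5, u5, u5', ?_, ?_,
      pre5, [], d, c, by rw [hu5, hpre5], by rw [hu5', hpre5]⟩
    · rw [hQ1, hA5, List.replicate_succ]
      simp [List.append_assoc]
    · rw [hQ2]
      simp [List.append_assoc]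
  have hreach2 : Reach SwitchProfile (DodgsonScore D W d + 1) Phat Q2 :=
    reach_trans hreach1 (reach_one hstep)
  have hQ2len : Q2.length = 4 * a + 2 * b + 4 := by
    simp [hQ2, hA2'len, hA1len, hA3, hA4, ← hn]
    omega
  have hnumQ2 : ∀ x : α, numPrefer Q2 d x =
      numPrefer A1 d x + (numPrefer A2' d x + (numPrefer A3 d x +
        (numPrefer A4 d x +
          ((if prefers u5' d x then 1 else 0) + numPrefer (List.replicate b u5) d x)))) := by
    intro x
    rw [hQ2, numPrefer_append, numPrefer_append, numPrefer_append, numPrefer_append,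
      numPrefer_cons]
  have hcw2 : CondorcetWinner (MergeCands C D sL tL) Q2 d := by
    refine ⟨hDin, fun x hx hxd => ?_⟩
    rw [hQ2len]
    have hxcases : x ∈ C ∨ x ∈ D ∨ x ∈ sL ∨ x ∈ tL := by
      simpa [MergeCands, Finset.mem_union, List.mem_toFinset, or_assoc] using hx
    have h1 : numPrefer A1 d x = 0 :=
      numPrefer_map_eq_zero (fun v _ => hG1neg x hxd v)
    have hxpre2 : x ∈ pre2 ∨ (x ∈ D ∧ x ≠ d) := by
      rcases hxcases with hxC | hxD | hxS | hxT
      · rcases eq_or_ne x c with rfl | hxc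
        · exact Or.inl (by simp [hpre2])
        · exact Or.inl (by simp [hpre2, (hcLmem x).2 ⟨hxC, hxc⟩])
      · exact Or.inr ⟨hxD, hxd⟩
      · exact Or.inl (by simp [hpre2, hxS])
      · exact Or.inl (by simp [hpre2, hxT])
    have key : 2 * a + b + 3 ≤ numPrefer Q2 d x := by
      rcases hxpre2 with hxp | ⟨hxD, hxd'⟩
      · -- x is beaten in all of A2', A3, A4, u5', and the remaining u5 copies
        have h2 : numPrefer A2' d x = m := by
          rw [numPrefer_map_eq_length (fun w _ => by
            simpa [hpre2, List.append_assoc] using hG2pos x (w) hxp), hW'len]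
        have hxp4 : x ∈ pre4 ∨ x = c := by
          simp only [hpre2, List.mem_append, List.mem_singleton] at hxp
          rcases hxp with ((ht | hc') | hs) | hcl
          · exact Or.inl (by simp [hpre4, ht])
          · exact Or.inr hc'
          · exact Or.inl (by simp [hpre4, hs])
          · exact Or.inl (by simp [hpre4, hcl])
        have hxp5 : x ∈ pre5 ∨ x = c := by
          simp only [hpre2, List.mem_append, List.mem_singleton] at hxp
          rcases hxp with ((ht | hc') | hs) | hcl
          · exact Or.inl (by simp [hpre5, ht])
          · exact Or.inr hc'
          · exact Or.inl (by simp [hpre5, hs])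
          · exact Or.inl (by simp [hpre5, hcl])
        have hxp3 : x ∈ pre2 ∨ x ∈ dL := Or.inl hxp
        have h3 : numPrefer A3 d x = a - b := numPrefer_replicate (hG3 x hxp3)
        have h4 : numPrefer A4 d x = a + 1 := numPrefer_replicate (hG4 x hxp4)
        rcases hxp5 with hxp5' | rfl
        · have h5 : (if prefers u5' d x then 1 else 0) = 1 := if_pos (hG5'pos x hxp5')
          have h6 : numPrefer (List.replicate b u5) d x = b :=
            numPrefer_replicate (hG5pos x hxp5')
          rw [hnumQ2, h1, h2, h3, h4, h5, h6]
          omega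
        · have h5 : (if prefers u5' d x then 1 else 0) = 1 := if_pos hG5'c
          have h6 : numPrefer (List.replicate b u5) d x = 0 :=
            numPrefer_replicate_zero hG5negc
          rw [hnumQ2, h1, h2, h3, h4, h5, h6]
          omega
      · -- x ∈ D \ {d}
        have hxdL : x ∈ dL := (hdLmem x).2 ⟨hxD, hxd'⟩
        have h2 : numPrefer A2' d x = numPrefer W' d x := by
          refine numPrefer_map_eq (fun w _ => ?_)
          have := hG2b x hxD hxd' w
          simpa [hpre2, List.append_assoc] using this
        have hWx : b + 1 ≤ numPrefer W' d x := by
          have := hcwW.2 x hxD hxd'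
          rw [hW'len] at this
          omega
        have h3 : numPrefer A3 d x = a - b := numPrefer_replicate (hG3 x (Or.inr hxdL))
        have h4 : numPrefer A4 d x = a + 1 :=
          numPrefer_replicate (hG4 x (Or.inl (by simp [hpre4, hxdL])))
        have h5 : (if prefers u5' d x then 1 else 0) = 1 :=
          if_pos (hG5'pos x (by simp [hpre5, hxdL]))
        have h6 : numPrefer (List.replicate b u5) d x = b :=
          numPrefer_replicate (hG5pos x (by simp [hpre5, hxdL]))
        rw [hnumQ2, h1, h2, h3, h4, h5, h6]
        omega
    omega
  have hupper : DodgsonScore (MergeCands C D sL tL) Phat d ≤ DodgsonScore D W d + 1 :=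
    dodgsonScore_le hreach2 hcw2

  -- ===================== lower bound =====================
  have hUb' : DodgsonScore D W d ≤ D.card * m := by rw [hm]; exact hUb
  have hP' : Phat = A1 ++ (A2 ++ (A3 ++ (A4 ++ A5))) := by
    rw [hP]; simp [List.append_assoc]
  have hPtake : Phat.take n = A1 := by
    rw [hP']; exact List.take_left' hA1len
  have hPdrop : Phat.drop n = A2 ++ (A3 ++ (A4 ++ A5)) := by
    rw [hP']; exact List.drop_left' hA1len
  have hPdrop2 : (Phat.drop n).take m = A2 := by
    rw [hPdrop]; exact List.take_left' hA2len
  have hprojP : projBlock n m D Phat = W := by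
    unfold projBlock
    rw [hPdrop2, hA2, List.map_map]
    rw [List.map_congr_left (g := id) ?_, List.map_id]
    intro w hw
    simp only [Function.comp_apply, id_eq]
    rw [List.filter_append, List.filter_append, List.filter_append, List.filter_append]
    have e0 : List.filter (fun z => decide (z ∈ D)) [c] = [] := by simp [hcD]
    have e1 : List.filter (fun z => decide (z ∈ D)) sL = [] :=
      List.filter_eq_nil_iff.mpr (fun z hz => by simpa using (hsLf z hz).2.1)
    have e2 : List.filter (fun z => decide (z ∈ D)) cL = [] :=
      List.filter_eq_nil_iff.mpr
        (fun z hz => by simpa using Finset.disjoint_left.1 hdisj ((hcLmem z).1 hz).1)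
    have e3 : List.filter (fun z => decide (z ∈ D)) tL = [] :=
      List.filter_eq_nil_iff.mpr (fun z hz => by simpa using (htLf z hz).2)
    have e4 : List.filter (fun z => decide (z ∈ D)) w = w :=
      List.filter_eq_self.mpr (fun z hz => by simpa using ((hW w hw).2 z).1 hz)
    rw [e0, e1, e2, e3, e4]
    simp
  have hPall : ∀ u ∈ Phat, ∀ z ∈ D, z ∈ u := by
    intro u hu z hz
    rw [hP] at hu
    simp only [List.mem_append, hA1, hA2, hA3, hA4, hA5, List.mem_map,
      List.mem_replicate] at hu
    have hzcases : z = d ∨ z ∈ dL := by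
      rcases eq_or_ne z d with h | h
      · exact Or.inl h
      · exact Or.inr ((hdLmem z).2 ⟨hz, h⟩)
    rcases hu with ((((⟨v, hv, rfl⟩ | ⟨w, hw, rfl⟩) | ⟨_, rfl⟩) | ⟨_, rfl⟩) | ⟨_, rfl⟩)
    · simp only [List.mem_append, List.mem_singleton]
      tauto
    · have : z ∈ w := ((hW w hw).2 z).2 hz
      simp only [List.mem_append]
      tauto
    · rw [hu3]
      simp only [List.mem_append, List.mem_singleton]
      tauto
    · rw [hu4]
      simp only [List.mem_append, List.mem_singleton, List.mem_cons, List.mem_reverse]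
      tauto
    · rw [hu5]
      simp only [List.mem_append, List.mem_singleton, List.mem_cons]
      tauto
  set SC := {k | ∃ B, Reach SwitchProfile k Phat B ∧
      CondorcetWinner (MergeCands C D sL tL) B d} with hSC
  have hlow : ∀ k ∈ SC, DodgsonScore D W d + 1 ≤ k := by
    intro k hk
    obtain ⟨Q, hre, hcw⟩ := hk
    by_cases hbig : D.card * m + 1 ≤ k
    · omega
    push_neg at hbig
    have hk2 : 2 * k ≤ sL.length := by
      rw [hsLlen]
      omega
    have hQlen : Q.length = 4 * a + 2 * b + 4 := by
      rw [← reach_profile_length hre, hNlen]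
    obtain ⟨j, hjk, hreachproj, hnum⟩ :=
      KL (lo := n) (len := m) (s := D) (x := d) (y := c) hcD hre
    -- initial d-c margin
    have hPA : numPrefer Phat d c = 2 * a + b + 2 := by
      rw [hP, numPrefer_append, numPrefer_append, numPrefer_append, numPrefer_append]
      have h1 : numPrefer A1 d c = 0 := numPrefer_map_eq_zero (fun v _ => hG1neg c hdc.symm v)
      have h2 : numPrefer A2 d c = m := by
        rw [numPrefer_map_eq_length (fun w _ => by
          simpa [hpre2, List.append_assoc] using hG2pos c w (by simp [hpre2])), ← hm]
      have h3 : numPrefer A3 d c = a - b :=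
        numPrefer_replicate (hG3 c (Or.inl (by simp [hpre2])))
      have h4 : numPrefer A4 d c = a + 1 := numPrefer_replicate (hG4 c (Or.inr rfl))
      have h5 : numPrefer A5 d c = 0 := numPrefer_replicate_zero hG5negc
      rw [h1, h2, h3, h4, h5]
      omega
    have hcin : c ∈ MergeCands C D sL tL := by simp [MergeCands, hc]
    have hQdc := hcw.2 c hcin hcd
    rw [hQlen] at hQdc
    have hj1 : j + 1 ≤ k := by
      rw [hPA] at hnum
      omega
    -- Condorcet for the projected W-block
    have hcwproj : CondorcetWinner D (projBlock n m D Q) d := by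
      refine ⟨hd, fun x hxD hxd => ?_⟩
      have hxdL : x ∈ dL := (hdLmem x).2 ⟨hxD, hxd⟩
      have hxt : x ∉ tL := fun h => (htLf x h).2 hxD
      have hxs : x ∉ sL := fun h => (hsLf x h).2.1 hxD
      have hxin : x ∈ MergeCands C D sL tL := by simp [MergeCands, hxD]
      have hQdx := hcw.2 x hxin hxd
      rw [hQlen] at hQdx
      -- split Q into the V block, the W block and the tail
      have hsplitQ : numPrefer Q d x
          = numPrefer (Q.take n) d x + (numPrefer ((Q.drop n).take m) d x
            + numPrefer ((Q.drop n).drop m) d x) := by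
        conv_lhs => rw [← List.take_append_drop n Q, ← List.take_append_drop m (Q.drop n)]
        rw [numPrefer_append, numPrefer_append]
      -- the V-block cannot improve
      have htakebound : numPrefer (Q.take n) d x ≤ numPrefer (Phat.take n) d x := by
        refine numPrefer_le_of_get ?_ ?_
        · rw [List.length_take, List.length_take, hNlen, hQlen]
        · intro i hi hp
          rw [List.length_take, hNlen] at hi
          have hin : i < n := by omega
          rw [getD_take hin] at hp ⊢
          obtain ⟨t, htk, hrt⟩ := reach_profile_getD hre i
          have hmemu : Phat.getD i [] ∈ Phat.take n := by
            rw [← getD_take hin]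
            exact getD_mem_of_lt (by rw [List.length_take, hNlen]; omega)
          rw [hPtake] at hmemu
          simp only [hA1, List.mem_map] at hmemu
          obtain ⟨v, hv, hequ⟩ := hmemu
          have heq2 : Phat.getD i [] = d :: (sL ++ (dL ++ tL ++ v)) := by
            rw [← hequ]; simp [List.append_assoc]
          have hfar : 2 * t < Nat.dist ((Phat.getD i []).idxOf d)
              ((Phat.getD i []).idxOf x) := by
            rw [heq2]
            have := dist_head0 (rest := dL ++ tL ++ v) (d := d) (b := x) hxd hxs
            omega
          exact (prefers_of_reach_far hrt hfar).1 hp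
      have htakeinit : numPrefer (Phat.take n) d x = 0 := by
        rw [hPtake]
        exact numPrefer_map_eq_zero (fun v _ => hG1neg x hxd v)
      -- the tail block is small
      have htailbound : numPrefer ((Q.drop n).drop m) d x ≤ 2 * a + 2 := by
        have := numPrefer_le_length (A := (Q.drop n).drop m) (x := d) (y := x)
        rw [List.length_drop, List.length_drop, hQlen] at this
        omega
      -- the projection preserves the W-block margin
      have hprojQ : numPrefer (projBlock n m D Q) d x
          = numPrefer ((Q.drop n).take m) d x := by
        unfold projBlock
        refine numPrefer_filter_proj (by simp [hd]) (by simp [hxD]) ?_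
        intro u hu
        have huQ : u ∈ Q := List.mem_of_mem_drop (List.mem_of_mem_take hu)
        obtain ⟨u0, hu0, hperm⟩ := reach_profile_mem hre u huQ
        exact ⟨hperm.mem_iff.1 (hPall u0 hu0 d hd), hperm.mem_iff.1 (hPall u0 hu0 x hxD)⟩
      have hlenproj : (projBlock n m D Q).length = m := by
        unfold projBlock
        rw [List.length_map, List.length_take, List.length_drop, hQlen]
        omega
      rw [hlenproj, hprojQ]
      omega
    rw [hprojP] at hreachproj
    have hscore : DodgsonScore D W d ≤ j := dodgsonScore_le hreachproj hcwproj
    omega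
  have hne2 : SC.Nonempty := ⟨DodgsonScore D W d + 1, Q2, hreach2, hcw2⟩
  have hdef : DodgsonScore (MergeCands C D sL tL) Phat d = sInf SC := rfl
  have hfin := hlow _ (Nat.sInf_mem hne2)
  omega

end DSide


/-- In the `Merge` election, the Dodgson score of `c` equals
`Score(C,c,V) + 1` and the Dodgson score of `d` equals `Score(D,d,W) + 1`. -/
theorem merge_scores {α : Type*} [DecidableEq α]
    (C D : Finset α) (c d : α) (V W : List (List α)) (cL dL sL tL : List α)
    (hok : MergeOK C D c d V W cL dL sL tL) :
    DodgsonScore (MergeCands C D sL tL) (MergeProfile c d V W cL dL sL tL) c =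
      DodgsonScore C V c + 1 ∧
    DodgsonScore (MergeCands C D sL tL) (MergeProfile c d V W cL dL sL tL) d =
      DodgsonScore D W d + 1 :=
  ⟨merge_score_c hok, merge_score_d hok⟩
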